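/- Let K ⊆ ℝ² be a bounded measurable set of positive Lebesgue measure, x_k ∈ ℝ², and {n, m} an orthonormal basis of ℝ². Define local coordinates y_n(x) = ⟨x − x_k, n⟩ and y_m(x) = ⟨x − x_k, m⟩, and let k be a segment of positive length contained in the line {x : y_n(x) = 0}, with arclength measure dL. Let ξ₁ = n, ξ₂ = m, ξ₃(x) = y_m(x) m, ξ₄(x) = y_m(x) n − y_n(x) m be the EFEM(1) enrichment modes. Then for each b ∈ {1, 2, 3, 4} there exists a unique test vector field of the form β_b(x) = (c₁ + c₂ y_n(x) + c₃ y_m(x)) n + (c₄ + c₅ y_n(x) + c₆ y_m(x)) m, with c₁, …, c₆ ∈ ℝ, such that ∫_K β_b · t dA = ∫_k ξ_b · t dL for every affine traction field t(x) = (t₁ + t₂ y_n(x) + t₃ y_m(x)) n + (t₄ + t₅ y_n(x) + t₆ y_m(x)) m, t₁, …, t₆ ∈ ℝ. -/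

import Mathlib

open MeasureTheory
open scoped RealInnerProductSpace

/-- An affine (piecewise-linear) vector field written in the fracture-aligned frame:
`x ↦ (c₁ + c₂ yₙ + c₃ yₘ) n + (c₄ + c₅ yₙ + c₆ yₘ) m`, where
`yₙ(x) = ⟪x − x_k, n⟫` and `yₘ(x) = ⟪x − x_k, m⟫`. Both the EFEM(1) test vectors
and the affine traction fields have this form. -/
noncomputable def affineField (xk n m : EuclideanSpace ℝ (Fin 2)) (c : Fin 6 → ℝ)
    (x : EuclideanSpace ℝ (Fin 2)) : EuclideanSpace ℝ (Fin 2) :=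
  (c 0 + c 1 * ⟪x - xk, n⟫ + c 2 * ⟪x - xk, m⟫) • n
    + (c 3 + c 4 * ⟪x - xk, n⟫ + c 5 * ⟪x - xk, m⟫) • m

/-- The four EFEM(1) enrichment modes `ξ₁ = n`, `ξ₂ = m`, `ξ₃ = yₘ m`,
`ξ₄ = yₘ n − yₙ m`. -/
noncomputable def enrichMode (xk n m : EuclideanSpace ℝ (Fin 2)) :
    Fin 4 → EuclideanSpace ℝ (Fin 2) → EuclideanSpace ℝ (Fin 2) :=
  ![fun _ => n,
    fun _ => m,
    fun x => ⟪x - xk, m⟫ • m,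
    fun x => ⟪x - xk, m⟫ • n - ⟪x - xk, n⟫ • m]

open Matrix

theorem cy (xk v : EuclideanSpace ℝ (Fin 2)) :
    Continuous fun x : EuclideanSpace ℝ (Fin 2) => ⟪x - xk, v⟫ :=
  (continuous_id.sub continuous_const).inner continuous_const

theorem af_expand (xk n m : EuclideanSpace ℝ (Fin 2)) (c : Fin 6 → ℝ)
    (x : EuclideanSpace ℝ (Fin 2)) :
    affineField xk n m c x
      = ∑ j : Fin 6, c j • affineField xk n m (Pi.single j 1) x := by
  simp [affineField, Fin.sum_univ_six, Pi.single_apply]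
  module

theorem af_cont (xk n m : EuclideanSpace ℝ (Fin 2)) (c : Fin 6 → ℝ) :
    Continuous (affineField xk n m c) := by
  unfold affineField
  exact (((continuous_const.add (continuous_const.mul (cy xk n))).add
      (continuous_const.mul (cy xk m))).smul continuous_const).add
    (((continuous_const.add (continuous_const.mul (cy xk n))).add
      (continuous_const.mul (cy xk m))).smul continuous_const)

theorem em_cont (xk n m : EuclideanSpace ℝ (Fin 2)) (i : Fin 4) :
    Continuous (enrichMode xk n m i) := by
  fin_cases i <;> simp only [enrichMode, Matrix.cons_val_zero, Matrix.cons_val_one,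
    Matrix.head_cons, Matrix.cons_val_two, Matrix.tail_cons, Matrix.cons_val_three]
  · exact continuous_const
  · exact continuous_const
  · exact (cy xk m).smul continuous_const
  · exact ((cy xk m).smul continuous_const).sub ((cy xk n).smul continuous_const)

theorem intK (K : Set (EuclideanSpace ℝ (Fin 2))) (hKb : Bornology.IsBounded K)
    (f : EuclideanSpace ℝ (Fin 2) → ℝ) (hf : Continuous f) : IntegrableOn f K volume :=
  (hf.continuousOn.integrableOn_compact hKb.isCompact_closure).mono_set subset_closure

theorem intSeg (a b : EuclideanSpace ℝ (Fin 2)) (f : EuclideanSpace ℝ (Fin 2) → ℝ)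
    (hf : Continuous f) : IntegrableOn f (segment ℝ a b) μH[1] := by
  have hc : IsCompact (segment ℝ a b) := by
    rw [segment_eq_image]
    exact isCompact_Icc.image (by fun_prop)
  obtain ⟨C, hC⟩ := hc.exists_bound_of_continuousOn hf.continuousOn
  have hmeas : MeasurableSet (segment ℝ a b) := hc.isClosed.measurableSet
  have hfin : μH[1] (segment ℝ a b) < ⊤ := by
    rw [hausdorffMeasure_segment]; exact edist_lt_top a b
  exact ⟨hf.aestronglyMeasurable,
    HasFiniteIntegral.restrict_of_bounded (C := C) hfin
      ((ae_restrict_iff' hmeas).2 (Filter.Eventually.of_forall hC))⟩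

theorem affine_ae_zero (K : Set (EuclideanSpace ℝ (Fin 2))) (hK : MeasurableSet K)
    (hKpos : 0 < volume K) (xk n m : EuclideanSpace ℝ (Fin 2))
    (hn : ‖n‖ = 1) (hm : ‖m‖ = 1) (hnm : ⟪n, m⟫ = 0) (α β γ : ℝ)
    (h : ∀ᵐ x ∂volume.restrict K, α + β * ⟪x - xk, n⟫ + γ * ⟪x - xk, m⟫ = 0) :
    α = 0 ∧ β = 0 ∧ γ = 0 := by
  set v : EuclideanSpace ℝ (Fin 2) := β • n + γ • m with hv
  have hnn : ⟪n, n⟫ = (1:ℝ) := by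
    rw [real_inner_self_eq_norm_mul_norm, hn]; norm_num
  have hmm : ⟪m, m⟫ = (1:ℝ) := by
    rw [real_inner_self_eq_norm_mul_norm, hm]; norm_num
  have hmn : ⟪m, n⟫ = (0:ℝ) := by rw [real_inner_comm]; exact hnm
  have hnv : ⟪n, v⟫ = β := by
    rw [hv, inner_add_right, real_inner_smul_right, real_inner_smul_right, hnn, hnm]; ring
  have hmv : ⟪m, v⟫ = γ := by
    rw [hv, inner_add_right, real_inner_smul_right, real_inner_smul_right, hmm, hmn]; ring
  have hrw : ∀ x : EuclideanSpace ℝ (Fin 2),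
      α + β * ⟪x - xk, n⟫ + γ * ⟪x - xk, m⟫ = α + ⟪x - xk, v⟫ := by
    intro x
    rw [hv, inner_add_right, real_inner_smul_right, real_inner_smul_right]
    ring
  clear_value v
  set d : ℝ := ⟪xk, v⟫ - α with hd
  set S : Set (EuclideanSpace ℝ (Fin 2)) := {x | ⟪x, v⟫ = d} with hSdef
  have hSm : MeasurableSet S :=
    (isClosed_eq (continuous_id.inner continuous_const) continuous_const).measurableSet
  have hmem : ∀ x : EuclideanSpace ℝ (Fin 2),
      (α + β * ⟪x - xk, n⟫ + γ * ⟪x - xk, m⟫ = 0) ↔ x ∈ S := by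
    intro x
    rw [hrw]
    have : ⟪x - xk, v⟫ = ⟪x, v⟫ - ⟪xk, v⟫ := inner_sub_left x xk v
    constructor
    · intro hx
      show ⟪x, v⟫ = d
      rw [hd]; linarith
    · intro hx
      have hx' : ⟪x, v⟫ = d := hx
      rw [hd] at hx'; linarith
  have hae : ∀ᵐ x ∂volume, x ∈ K → x ∈ S := by
    rw [← ae_restrict_iff' hK]
    filter_upwards [h] with x hx using (hmem x).1 hx
  have hdiff : volume (K \ S) = 0 := by
    refine measure_mono_null ?_ (ae_iff.1 hae)
    intro x hx
    simp only [Set.mem_setOf_eq, Classical.not_imp]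
    exact ⟨hx.1, hx.2⟩
  have hKS : 0 < volume (K ∩ S) := by
    have h2 := measure_inter_add_diff K hSm (μ := volume)
    rw [hdiff, add_zero] at h2
    rw [h2]; exact hKpos
  have hvz : v = 0 := by
    by_contra hv0
    obtain ⟨x₀, hx₀⟩ := nonempty_of_measure_ne_zero hKS.ne'
    set W : Submodule ℝ (EuclideanSpace ℝ (Fin 2)) :=
      LinearMap.ker ((innerSL ℝ v : EuclideanSpace ℝ (Fin 2) →L[ℝ] ℝ) :
        EuclideanSpace ℝ (Fin 2) →ₗ[ℝ] ℝ) with hW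
    have hWne : W ≠ ⊤ := by
      intro htop
      have hvW : v ∈ W := htop ▸ Submodule.mem_top
      rw [hW, LinearMap.mem_ker] at hvW
      have : ⟪v, v⟫ = (0:ℝ) := hvW
      exact hv0 (inner_self_eq_zero.1 this)
    have hx0S : ⟪x₀, v⟫ = d := hx₀.2
    have hSW : S = (fun x => x + (-x₀)) ⁻¹' (W : Set (EuclideanSpace ℝ (Fin 2))) := by
      ext x
      have key : ⟪v, x + -x₀⟫ = ⟪x, v⟫ - ⟪x₀, v⟫ := by
        rw [inner_add_right, inner_neg_right, real_inner_comm v x, real_inner_comm v x₀]; ring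
      constructor
      · intro hx
        have hx' : ⟪x, v⟫ = d := hx
        show x + -x₀ ∈ W
        rw [hW, LinearMap.mem_ker]
        show ⟪v, x + -x₀⟫ = (0:ℝ)
        rw [key, hx', hx0S]; ring
      · intro hx
        have hx' : ⟪v, x + -x₀⟫ = (0:ℝ) := hx
        rw [key, hx0S] at hx'
        show ⟪x, v⟫ = d
        linarith
    have hS0 : volume S = 0 := by
      rw [hSW, measure_preimage_add_right]
      exact Measure.addHaar_submodule volume W hWne
    exact absurd (measure_mono_null Set.inter_subset_right hS0) hKS.ne'
  have hβ : β = 0 := by rw [← hnv, hvz, inner_zero_right]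
  have hγ : γ = 0 := by rw [← hmv, hvz, inner_zero_right]
  refine ⟨?_, hβ, hγ⟩
  have hne : (volume.restrict K) ≠ 0 := by
    intro h0
    rw [← Measure.measure_univ_eq_zero, Measure.restrict_apply_univ] at h0
    exact hKpos.ne' h0
  have : (Filter.NeBot (ae (volume.restrict K))) := ae_neBot.2 hne
  obtain ⟨x, hx⟩ := h.exists
  rw [hβ, hγ] at hx
  simpa using hx


/-- For a bounded measurable `K ⊆ ℝ²` of positive area, a fracture
segment `k = [a,b]` of positive length lying in the line `{yₙ = 0}`, and each
EFEM(1) enrichment mode `ξ_b`, there is a unique affine test vector field `β_b`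
(with six coefficients) such that `∫_K β_b · t dA = ∫_k ξ_b · t dL` for every
affine traction field `t`. -/
theorem stmt_1
    (K : Set (EuclideanSpace ℝ (Fin 2))) (hK : MeasurableSet K)
    (hKb : Bornology.IsBounded K) (hKpos : 0 < volume K)
    (xk n m : EuclideanSpace ℝ (Fin 2))
    (hn : ‖n‖ = 1) (hm : ‖m‖ = 1) (hnm : ⟪n, m⟫ = 0)
    (a b : EuclideanSpace ℝ (Fin 2)) (hab : a ≠ b)
    (hline : segment ℝ a b ⊆ {x | ⟪x - xk, n⟫ = 0})
    (i : Fin 4) :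
    ∃! c : Fin 6 → ℝ, ∀ t : Fin 6 → ℝ,
      (∫ x in K, ⟪affineField xk n m c x, affineField xk n m t x⟫ ∂volume)
        = ∫ x in segment ℝ a b,
            ⟪enrichMode xk n m i x, affineField xk n m t x⟫ ∂μH[1] := by
  set F : Fin 6 → EuclideanSpace ℝ (Fin 2) → EuclideanSpace ℝ (Fin 2) :=
    fun j => affineField xk n m (Pi.single j 1) with hF
  have hFc : ∀ s j : Fin 6, Continuous fun x => ⟪F s x, F j x⟫ := fun s j =>
    (af_cont xk n m _).inner (af_cont xk n m _)
  have hInt : ∀ s j : Fin 6, IntegrableOn (fun x => ⟪F s x, F j x⟫) K volume := fun s j =>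
    intK K hKb _ (hFc s j)
  set M : Matrix (Fin 6) (Fin 6) ℝ := fun s j => ∫ x in K, ⟪F s x, F j x⟫ with hM
  set R : Fin 6 → ℝ :=
    fun j => ∫ x in segment ℝ a b, ⟪enrichMode xk n m i x, F j x⟫ ∂μH[1] with hR
  -- key 1 : LHS as bilinear form
  have key1 : ∀ c t : Fin 6 → ℝ,
      (∫ x in K, ⟪affineField xk n m c x, affineField xk n m t x⟫ ∂volume)
        = c ⬝ᵥ (M *ᵥ t) := by
    intro c t
    have hpt : ∀ x, ⟪affineField xk n m c x, affineField xk n m t x⟫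
        = ∑ s : Fin 6, c s * ∑ j : Fin 6, t j * ⟪F s x, F j x⟫ := by
      intro x
      rw [af_expand xk n m c x, af_expand xk n m t x, sum_inner]
      refine Finset.sum_congr rfl fun s _ => ?_
      rw [real_inner_smul_left, inner_sum]
      congr 1
      exact Finset.sum_congr rfl fun j _ => real_inner_smul_right _ _ _
    calc (∫ x in K, ⟪affineField xk n m c x, affineField xk n m t x⟫ ∂volume)
        = ∫ x in K, ∑ s : Fin 6, c s * ∑ j : Fin 6, t j * ⟪F s x, F j x⟫ ∂volume := by
          simp_rw [hpt]
      _ = ∑ s : Fin 6, ∫ x in K, c s * ∑ j : Fin 6, t j * ⟪F s x, F j x⟫ ∂volume := by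
          refine integral_finset_sum _ fun s _ => ?_
          refine Integrable.const_mul ?_ _
          exact integrable_finset_sum _ fun j _ => (hInt s j).const_mul _
      _ = ∑ s : Fin 6, c s * ∫ x in K, ∑ j : Fin 6, t j * ⟪F s x, F j x⟫ ∂volume := by
          exact Finset.sum_congr rfl fun s _ => integral_const_mul _ _
      _ = ∑ s : Fin 6, c s * ∑ j : Fin 6, ∫ x in K, t j * ⟪F s x, F j x⟫ ∂volume := by
          refine Finset.sum_congr rfl fun s _ => ?_
          congr 1
          exact integral_finset_sum _ fun j _ => (hInt s j).const_mul _
      _ = ∑ s : Fin 6, c s * ∑ j : Fin 6, t j * M s j := by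
          refine Finset.sum_congr rfl fun s _ => ?_
          congr 1
          exact Finset.sum_congr rfl fun j _ => integral_const_mul _ _
      _ = c ⬝ᵥ (M *ᵥ t) := by
          refine Finset.sum_congr rfl fun s _ => ?_
          simp only [Matrix.mulVec, dotProduct]
          congr 1
          exact Finset.sum_congr rfl fun j _ => mul_comm _ _
  -- key 2 : RHS as linear form
  have key2 : ∀ t : Fin 6 → ℝ,
      (∫ x in segment ℝ a b, ⟪enrichMode xk n m i x, affineField xk n m t x⟫ ∂μH[1])
        = R ⬝ᵥ t := by
    intro t
    have hpt : ∀ x, ⟪enrichMode xk n m i x, affineField xk n m t x⟫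
        = ∑ j : Fin 6, t j * ⟪enrichMode xk n m i x, F j x⟫ := by
      intro x
      rw [af_expand xk n m t x, inner_sum]
      exact Finset.sum_congr rfl fun j _ => real_inner_smul_right _ _ _
    have hIntS : ∀ j : Fin 6,
        IntegrableOn (fun x => ⟪enrichMode xk n m i x, F j x⟫) (segment ℝ a b) μH[1] :=
      fun j => intSeg a b _ ((em_cont xk n m i).inner (af_cont xk n m _))
    calc (∫ x in segment ℝ a b, ⟪enrichMode xk n m i x, affineField xk n m t x⟫ ∂μH[1])
        = ∫ x in segment ℝ a b,
            ∑ j : Fin 6, t j * ⟪enrichMode xk n m i x, F j x⟫ ∂μH[1] := by simp_rw [hpt]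
      _ = ∑ j : Fin 6, ∫ x in segment ℝ a b,
            t j * ⟪enrichMode xk n m i x, F j x⟫ ∂μH[1] :=
          integral_finset_sum _ fun j _ => (hIntS j).const_mul _
      _ = ∑ j : Fin 6, t j * R j :=
          Finset.sum_congr rfl fun j _ => integral_const_mul _ _
      _ = R ⬝ᵥ t := Finset.sum_congr rfl fun j _ => mul_comm _ _
  -- symmetry of M
  have hMsymm : Mᵀ = M := by
    ext s j
    simp only [Matrix.transpose_apply, hM]
    exact integral_congr_ae (Filter.Eventually.of_forall fun x => real_inner_comm _ _)
  -- condition ↔ linear equation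
  have hiff : ∀ c : Fin 6 → ℝ,
      (∀ t : Fin 6 → ℝ,
        (∫ x in K, ⟪affineField xk n m c x, affineField xk n m t x⟫ ∂volume)
          = ∫ x in segment ℝ a b,
              ⟪enrichMode xk n m i x, affineField xk n m t x⟫ ∂μH[1])
      ↔ M *ᵥ c = R := by
    intro c
    constructor
    · intro h
      funext j
      have hj := h (Pi.single j 1)
      rw [key1, key2] at hj
      rw [Matrix.dotProduct_mulVec, ← Matrix.mulVec_transpose, hMsymm] at hj
      simpa [dotProduct_single] using hj
    · intro h t
      rw [key1, key2, Matrix.dotProduct_mulVec, ← Matrix.mulVec_transpose, hMsymm, h]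
  -- injectivity via Gram argument
  have hinj : Function.Injective M.mulVecLin := by
    refine (injective_iff_map_eq_zero _).mpr fun c hc0 => ?_
    rw [Matrix.mulVecLin_apply] at hc0
    have h0 : (∫ x in K, ⟪affineField xk n m c x, affineField xk n m c x⟫ ∂volume) = 0 := by
      rw [key1 c c, hc0, dotProduct_zero]
    have hint : IntegrableOn
        (fun x => ⟪affineField xk n m c x, affineField xk n m c x⟫) K volume :=
      intK K hKb _ ((af_cont xk n m c).inner (af_cont xk n m c))
    have hz := (integral_eq_zero_iff_of_nonneg (fun x => real_inner_self_nonneg) hint).1 h0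
    have hzero : ∀ᵐ x ∂volume.restrict K, affineField xk n m c x = 0 := by
      filter_upwards [hz] with x hx
      exact inner_self_eq_zero.1 hx
    have hnn : ⟪n, n⟫ = (1:ℝ) := by
      rw [real_inner_self_eq_norm_mul_norm, hn]; norm_num
    have hmm2 : ⟪m, m⟫ = (1:ℝ) := by
      rw [real_inner_self_eq_norm_mul_norm, hm]; norm_num
    have hmn : ⟪m, n⟫ = (0:ℝ) := by rw [real_inner_comm]; exact hnm
    have hp := affine_ae_zero K hK hKpos xk n m hn hm hnm (c 0) (c 1) (c 2) ?_
    · have hq := affine_ae_zero K hK hKpos xk n m hn hm hnm (c 3) (c 4) (c 5) ?_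
      · funext j
        fin_cases j
        · exact hp.1
        · exact hp.2.1
        · exact hp.2.2
        · exact hq.1
        · exact hq.2.1
        · exact hq.2.2
      · filter_upwards [hzero] with x hx
        have h1 : ⟪affineField xk n m c x, m⟫ = 0 := by rw [hx]; exact inner_zero_left m
        simp only [affineField, inner_add_left, real_inner_smul_left, hnm, hmm2,
          mul_one, mul_zero, zero_add, add_zero] at h1
        exact h1
    · filter_upwards [hzero] with x hx
      have h1 : ⟪affineField xk n m c x, n⟫ = 0 := by rw [hx]; exact inner_zero_left n
      simp only [affineField, inner_add_left, real_inner_smul_left, hnn, hmn,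
        mul_one, mul_zero, zero_add, add_zero] at h1
      exact h1
  have hbij : Function.Bijective M.mulVecLin :=
    ⟨hinj, (LinearMap.injective_iff_surjective.mp hinj)⟩
  obtain ⟨c, hc, hu⟩ := hbij.existsUnique R
  refine ⟨c, (hiff c).2 hc, fun c' hc' => hu c' ((hiff c').1 hc')⟩
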